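/- arXiv:1003.4874 — 2 statements merged into one kernel-verified Lean document; each statement's English description precedes it below -/
import Mathlib

section
/- Let B → A be a ring homomorphism of commutative rings, and let B̄ = ⊕_{i≥0} B̄_i and Ā = ⊕_{i≥0} Ā_i be nonnegatively graded rings with B̄_0 = B and Ā_0 = A, together with a graded ring homomorphism B̄ → Ā extending B → A. If Ā is flat as a B̄-module, then A is flat as a B-module. -/
open TensorProduct

theorem aux0 {B A Bbar Abar : Type*} [CommRing B] [CommRing A] [CommRing Bbar] [CommRing Abar]
    [Algebra B Bbar] [Algebra A Abar] [Algebra B A] [Algebra Bbar Abar]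
    (𝒷 : ℕ → Submodule B Bbar) (𝒶 : ℕ → Submodule A Abar)
    [GradedAlgebra 𝒷] [GradedAlgebra 𝒶]
    (h𝒷0 : 𝒷 0 = Subalgebra.toSubmodule (⊥ : Subalgebra B Bbar))
    (h𝒶0 : 𝒶 0 = Subalgebra.toSubmodule (⊥ : Subalgebra A Abar))
    (hBinj : Function.Injective (algebraMap B Bbar))
    (hAinj : Function.Injective (algebraMap A Abar))
    (hΦgr : ∀ i, ∀ x ∈ 𝒷 i, algebraMap Bbar Abar x ∈ 𝒶 i)
    (hΦext : ∀ b : B,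
      algebraMap Bbar Abar (algebraMap B Bbar b) = algebraMap A Abar (algebraMap B A b))
    [Module.Flat Bbar Abar] : Module.Flat B A := by
  classical
  -- degree zero projections land in the bottom subalgebra
  have hmemB : ∀ x : Bbar, ∃ b : B, algebraMap B Bbar b = (DirectSum.decompose 𝒷 x 0 : Bbar) := by
    intro x
    have h : (DirectSum.decompose 𝒷 x 0 : Bbar) ∈ Subalgebra.toSubmodule (⊥ : Subalgebra B Bbar) := by
      rw [← h𝒷0]; exact SetLike.coe_mem _
    rw [Subalgebra.mem_toSubmodule, Algebra.mem_bot] at h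
    obtain ⟨b, hb⟩ := h
    exact ⟨b, hb⟩
  have hmemA : ∀ x : Abar, ∃ a : A, algebraMap A Abar a = (DirectSum.decompose 𝒶 x 0 : Abar) := by
    intro x
    have h : (DirectSum.decompose 𝒶 x 0 : Abar) ∈ Subalgebra.toSubmodule (⊥ : Subalgebra A Abar) := by
      rw [← h𝒶0]; exact SetLike.coe_mem _
    rw [Subalgebra.mem_toSubmodule, Algebra.mem_bot] at h
    obtain ⟨a, ha⟩ := h
    exact ⟨a, ha⟩
  choose pB hpB using hmemB
  choose pA hpA using hmemA
  -- the projections are ring homomorphisms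
  have hdB : ∀ x : Bbar, (DirectSum.decompose 𝒷 x 0 : Bbar) = GradedRing.projZeroRingHom 𝒷 x :=
    fun x => rfl
  have hdA : ∀ x : Abar, (DirectSum.decompose 𝒶 x 0 : Abar) = GradedRing.projZeroRingHom 𝒶 x :=
    fun x => rfl
  have hpB_one : pB 1 = 1 := by
    apply hBinj; simp only [hpB, hdB, map_one]
  have hpB_mul : ∀ x y : Bbar, pB (x * y) = pB x * pB y := by
    intro x y; apply hBinj
    simp only [map_mul, hpB, hdB]
  have hpB_zero : pB 0 = 0 := by
    apply hBinj; simp only [hpB, hdB, map_zero]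
  have hpB_add : ∀ x y : Bbar, pB (x + y) = pB x + pB y := by
    intro x y; apply hBinj
    simp only [map_add, hpB, hdB]
  have hpA_mul : ∀ x y : Abar, pA (x * y) = pA x * pA y := by
    intro x y; apply hAinj
    simp only [map_mul, hpA, hdA]
  have hpA_add : ∀ x y : Abar, pA (x + y) = pA x + pA y := by
    intro x y; apply hAinj
    simp only [map_add, hpA, hdA]
  -- projections retract the inclusions
  have hιB_mem : ∀ b : B, algebraMap B Bbar b ∈ 𝒷 0 := by
    intro b
    rw [h𝒷0]
    rw [Subalgebra.mem_toSubmodule, Algebra.mem_bot]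
    exact ⟨b, rfl⟩
  have hιA_mem : ∀ a : A, algebraMap A Abar a ∈ 𝒶 0 := by
    intro a
    rw [h𝒶0]
    rw [Subalgebra.mem_toSubmodule, Algebra.mem_bot]
    exact ⟨a, rfl⟩
  have hpB_ι : ∀ b : B, pB (algebraMap B Bbar b) = b := by
    intro b; apply hBinj
    rw [hpB, DirectSum.decompose_of_mem_same 𝒷 (hιB_mem b)]
  have hpA_ι : ∀ a : A, pA (algebraMap A Abar a) = a := by
    intro a; apply hAinj
    rw [hpA, DirectSum.decompose_of_mem_same 𝒶 (hιA_mem a)]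
  -- naturality of the degree-zero projection w.r.t. Φ
  have hnat : ∀ x : Bbar, (DirectSum.decompose 𝒶 (algebraMap Bbar Abar x) 0 : Abar)
      = algebraMap Bbar Abar (DirectSum.decompose 𝒷 x 0 : Bbar) := by
    refine DirectSum.Decomposition.inductionOn 𝒷 ?_ ?_ ?_
    · simp
    · intro i m
      by_cases hi : i = 0
      · subst hi
        rw [DirectSum.decompose_of_mem_same 𝒷 m.2,
          DirectSum.decompose_of_mem_same 𝒶 (hΦgr 0 m m.2)]
      · rw [DirectSum.decompose_of_mem_ne 𝒷 m.2 hi,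
          DirectSum.decompose_of_mem_ne 𝒶 (hΦgr i m m.2) hi, map_zero]
    · intro x y hx hy
      simp only [hdA, hdB] at hx hy ⊢
      simp only [map_add, hx, hy]
  have hpAΦ : ∀ x : Bbar, pA (algebraMap Bbar Abar x) = algebraMap B A (pB x) := by
    intro x; apply hAinj
    rw [hpA, hnat, ← hpB, hΦext]
  -- ring hom Bbar →+* B
  let πB : Bbar →+* B :=
  { toFun := pB
    map_one' := hpB_one
    map_mul' := hpB_mul
    map_zero' := hpB_zero
    map_add' := hpB_add }
  letI : Algebra Bbar B := πB.toAlgebra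
  letI : Algebra Bbar A := ((algebraMap B A).comp πB).toAlgebra
  haveI : IsScalarTower Bbar B A := IsScalarTower.of_algebraMap_eq fun x => rfl
  -- pA as a Bbar-linear map
  let pAlin : Abar →ₗ[Bbar] A :=
  { toFun := pA
    map_add' := hpA_add
    map_smul' := by
      intro x y
      simp only [RingHom.id_apply]
      rw [Algebra.smul_def, hpA_mul, hpAΦ, Algebra.smul_def]
      rfl }
  let r : B ⊗[Bbar] Abar →ₗ[B] A := pAlin.liftBaseChange B
  -- the inclusion as a B-linear map
  let e : A →ₗ[B] B ⊗[Bbar] Abar :=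
  { toFun := fun a => (1 : B) ⊗ₜ[Bbar] algebraMap A Abar a
    map_add' := fun a b => by
      show (1 : B) ⊗ₜ[Bbar] algebraMap A Abar (a + b) = _
      rw [map_add, TensorProduct.tmul_add]
    map_smul' := fun b a => by
      simp only [RingHom.id_apply]
      show (1 : B) ⊗ₜ[Bbar] algebraMap A Abar (b • a) = b • ((1 : B) ⊗ₜ[Bbar] algebraMap A Abar a)
      have h1 : (algebraMap B Bbar b) • (1 : B) = b := by
        show πB (algebraMap B Bbar b) * 1 = b
        rw [mul_one]; exact hpB_ι b
      rw [Algebra.smul_def b a, map_mul, ← hΦext,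
        ← Algebra.smul_def (algebraMap B Bbar b) (algebraMap A Abar a),
        ← TensorProduct.smul_tmul, h1, TensorProduct.smul_tmul', smul_eq_mul, mul_one] }
  have hre : r.comp e = LinearMap.id := by
    ext a
    show r ((1 : B) ⊗ₜ[Bbar] algebraMap A Abar a) = a
    rw [LinearMap.liftBaseChange_tmul, one_smul]
    exact hpA_ι a
  exact Module.Flat.of_retract e r hre

/-- Let `B → A` be a ring homomorphism of commutative rings, and let
`B̄ = ⊕ B̄ᵢ`, `Ā = ⊕ Āᵢ` be nonnegatively graded rings with degree-zero parts `B` and `A`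
(encoded: `B̄`, `Ā` are graded `B`- resp. `A`-algebras whose degree-zero component is exactly
the image of the base, the base injecting into them), together with a graded ring homomorphism
`Φ : B̄ → Ā` extending `f : B → A`.  If `Ā` is flat as a `B̄`-module, then `A` is flat as a
`B`-module. -/
theorem stmt0
    {B A Bbar Abar : Type*} [CommRing B] [CommRing A] [CommRing Bbar] [CommRing Abar]
    [Algebra B Bbar] [Algebra A Abar]
    (𝒷 : ℕ → Submodule B Bbar) (𝒶 : ℕ → Submodule A Abar)
    [GradedAlgebra 𝒷] [GradedAlgebra 𝒶]
    (h𝒷0 : 𝒷 0 = Subalgebra.toSubmodule (⊥ : Subalgebra B Bbar))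
    (h𝒶0 : 𝒶 0 = Subalgebra.toSubmodule (⊥ : Subalgebra A Abar))
    (hBinj : Function.Injective (algebraMap B Bbar))
    (hAinj : Function.Injective (algebraMap A Abar))
    (f : B →+* A) (Φ : Bbar →+* Abar)
    (hΦgr : ∀ i, ∀ x ∈ 𝒷 i, Φ x ∈ 𝒶 i)
    (hΦext : ∀ b : B, Φ (algebraMap B Bbar b) = algebraMap A Abar (f b))
    (hflat : letI := Φ.toAlgebra; Module.Flat Bbar Abar) :
    letI := f.toAlgebra; Module.Flat B A := by
  letI := f.toAlgebra
  letI := Φ.toAlgebra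
  haveI : Module.Flat Bbar Abar := hflat
  exact aux0 𝒷 𝒶 h𝒷0 h𝒶0 hBinj hAinj hΦgr hΦext
end

section
/- Let B → A be a non-flat ring homomorphism of commutative rings, witnessed by an ideal I ⊆ B for which I ⊗_B A → A is not injective. Let B̄ → Ā be a graded ring homomorphism of nonnegatively graded rings with degree-zero parts B → A. Then the map IB̄ ⊗_{B̄} Ā → Ā is not injective; in particular Ā is not flat over B̄. -/
open TensorProduct

/-- Let `B → A` be a non-flat ring homomorphism of commutative rings, witnessed by
an ideal `I ⊆ B` for which the canonical map `I ⊗_B A → A` is not injective.  Let `B̄ → Ā` be a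
graded ring homomorphism of nonnegatively graded rings with degree-zero parts `B → A`.  Then the
canonical map `IB̄ ⊗_{B̄} Ā → Ā` is not injective; in particular `Ā` is not flat over `B̄`. -/
theorem stmt2
    {B A Bbar Abar : Type*} [CommRing B] [CommRing A] [CommRing Bbar] [CommRing Abar]
    [Algebra B Bbar] [Algebra A Abar]
    (𝒷 : ℕ → Submodule B Bbar) (𝒶 : ℕ → Submodule A Abar)
    [GradedAlgebra 𝒷] [GradedAlgebra 𝒶]
    (h𝒷0 : 𝒷 0 = Subalgebra.toSubmodule (⊥ : Subalgebra B Bbar))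
    (h𝒶0 : 𝒶 0 = Subalgebra.toSubmodule (⊥ : Subalgebra A Abar))
    (hBinj : Function.Injective (algebraMap B Bbar))
    (hAinj : Function.Injective (algebraMap A Abar))
    (f : B →+* A) (Φ : Bbar →+* Abar)
    (hΦgr : ∀ i, ∀ x ∈ 𝒷 i, Φ x ∈ 𝒶 i)
    (hΦext : ∀ b : B, Φ (algebraMap B Bbar b) = algebraMap A Abar (f b))
    (I : Ideal B)
    (hI : letI := f.toAlgebra;
      ¬ Function.Injective
        (TensorProduct.lift (((LinearMap.lsmul B A).comp I.subtype)) :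
          I ⊗[B] A →ₗ[B] A)) :
    letI := Φ.toAlgebra;
    ¬ Function.Injective
        (TensorProduct.lift (((LinearMap.lsmul Bbar Abar).comp
            (I.map (algebraMap B Bbar)).subtype)) :
          (I.map (algebraMap B Bbar)) ⊗[Bbar] Abar →ₗ[Bbar] Abar) ∧
    letI := Φ.toAlgebra; ¬ Module.Flat Bbar Abar := by
  letI := f.toAlgebra
  letI := Φ.toAlgebra
  -- projections onto degree zero
  set πB : Bbar →+* Bbar := GradedRing.projZeroRingHom 𝒷 with hπB
  set πA : Abar →+* Abar := GradedRing.projZeroRingHom 𝒶 with hπA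
  have hπBmem : ∀ x : Bbar, πB x ∈ (⊥ : Subalgebra B Bbar) := by
    intro x
    have : πB x ∈ 𝒷 0 := by
      simp only [hπB, GradedRing.projZeroRingHom_apply]
      exact SetLike.coe_mem _
    rwa [h𝒷0] at this
  have hπAmem : ∀ x : Abar, πA x ∈ (⊥ : Subalgebra A Abar) := by
    intro x
    have : πA x ∈ 𝒶 0 := by
      simp only [hπA, GradedRing.projZeroRingHom_apply]
      exact SetLike.coe_mem _
    rwa [h𝒶0] at this
  set eB := Algebra.botEquivOfInjective hBinj with heB
  set eA := Algebra.botEquivOfInjective hAinj with heA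
  set qB : Bbar → B := fun x => eB ⟨πB x, hπBmem x⟩ with hqBdef
  set qA : Abar → A := fun x => eA ⟨πA x, hπAmem x⟩ with hqAdef
  have heBsymm : ∀ b : B, ((eB.symm b : (⊥ : Subalgebra B Bbar)) : Bbar) = algebraMap B Bbar b :=
    fun b => rfl
  have heAsymm : ∀ a : A, ((eA.symm a : (⊥ : Subalgebra A Abar)) : Abar) = algebraMap A Abar a :=
    fun a => rfl
  have heBval : ∀ y : (⊥ : Subalgebra B Bbar), algebraMap B Bbar (eB y) = y := by
    intro y
    rw [← heBsymm, eB.symm_apply_apply]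
  have heAval : ∀ y : (⊥ : Subalgebra A Abar), algebraMap A Abar (eA y) = y := by
    intro y
    rw [← heAsymm, eA.symm_apply_apply]
  have hqB' : ∀ x : Bbar, algebraMap B Bbar (qB x) = πB x := fun x => heBval _
  have hqA' : ∀ x : Abar, algebraMap A Abar (qA x) = πA x := fun x => heAval _
  have hqBsec : ∀ b : B, qB (algebraMap B Bbar b) = b := by
    intro b
    apply hBinj
    rw [hqB']
    simp only [hπB, GradedRing.projZeroRingHom_apply]
    exact DirectSum.decompose_of_mem_same 𝒷 (by rw [h𝒷0]; exact Algebra.mem_bot.2 ⟨b, rfl⟩)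
  have hqAsec : ∀ a : A, qA (algebraMap A Abar a) = a := by
    intro a
    apply hAinj
    rw [hqA']
    simp only [hπA, GradedRing.projZeroRingHom_apply]
    exact DirectSum.decompose_of_mem_same 𝒶 (by rw [h𝒶0]; exact Algebra.mem_bot.2 ⟨a, rfl⟩)
  have hqBadd : ∀ x y : Bbar, qB (x + y) = qB x + qB y := by
    intro x y; apply hBinj; rw [map_add, hqB', hqB', hqB', map_add]
  have hqAadd : ∀ x y : Abar, qA (x + y) = qA x + qA y := by
    intro x y; apply hAinj; rw [map_add, hqA', hqA', hqA', map_add]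
  have hqBmul : ∀ x y : Bbar, qB (x * y) = qB x * qB y := by
    intro x y; apply hBinj; rw [map_mul, hqB', hqB', hqB', map_mul]
  have hqAmul : ∀ x y : Abar, qA (x * y) = qA x * qA y := by
    intro x y; apply hAinj; rw [map_mul, hqA', hqA', hqA', map_mul]
  -- Φ commutes with degree-zero projections
  have hgr0 : ∀ x : Bbar, πA (Φ x) = Φ (πB x) := by
    refine DirectSum.Decomposition.inductionOn 𝒷 ?_ ?_ ?_
    · simp
    · rintro i ⟨m, hm⟩
      simp only [hπA, hπB, GradedRing.projZeroRingHom_apply]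
      rcases eq_or_ne i 0 with rfl | hi
      · rw [DirectSum.decompose_of_mem_same 𝒷 hm,
          DirectSum.decompose_of_mem_same 𝒶 (hΦgr 0 m hm)]
      · rw [DirectSum.decompose_of_mem_ne 𝒷 hm hi,
          DirectSum.decompose_of_mem_ne 𝒶 (hΦgr i m hm) hi, map_zero]
    · intro x y hx hy
      simp only [map_add, hx, hy]
  have hcomm : ∀ x : Bbar, qA (Φ x) = f (qB x) := by
    intro x
    apply hAinj
    rw [hqA', hgr0, ← hΦext, hqB']
  -- qB maps IB̄ into I
  have hmemI : ∀ x ∈ I.map (algebraMap B Bbar), qB x ∈ I := by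
    intro x hx
    refine Submodule.span_induction ?_ ?_ ?_ ?_ hx
    · rintro y ⟨i, hi, rfl⟩
      rw [hqBsec]; exact hi
    · have : qB 0 = 0 := by apply hBinj; rw [hqB', map_zero, map_zero]
      rw [this]; exact I.zero_mem
    · intro x y _ _ hx hy
      rw [hqBadd]; exact I.add_mem hx hy
    · intro c x _ hx
      rw [smul_eq_mul, hqBmul]
      exact I.mul_mem_left _ hx
  set J := I.map (algebraMap B Bbar) with hJ
  -- the forward map g : I ⊗[B] A → J ⊗[Bbar] Abar
  have hsmulA : ∀ (b : B) (a : A), b • a = f b * a := fun b a => rfl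
  set G : (I : Type _) →+ A →+ (J ⊗[Bbar] Abar) :=
    AddMonoidHom.mk' (fun i => AddMonoidHom.mk'
      (fun a => (⟨algebraMap B Bbar i, Ideal.mem_map_of_mem _ i.2⟩ : J)
          ⊗ₜ[Bbar] algebraMap A Abar a)
      (fun a b => by simp only [map_add, tmul_add]))
      (fun i j => by
        ext a
        simp only [AddMonoidHom.mk'_apply, AddMonoidHom.add_apply]
        have : (⟨algebraMap B Bbar ((i + j : I) : B), Ideal.mem_map_of_mem _ (i + j : I).2⟩ : J)
            = ⟨algebraMap B Bbar i, Ideal.mem_map_of_mem _ i.2⟩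
              + ⟨algebraMap B Bbar j, Ideal.mem_map_of_mem _ j.2⟩ := by
          ext; simp
        rw [this, add_tmul]) with hG
  have hGbal : ∀ (b : B) (i : I) (a : A), G (b • i) a = G i (b • a) := by
    intro b i a
    simp only [hG, AddMonoidHom.mk'_apply]
    have h1 : (⟨algebraMap B Bbar ((b • i : I) : B), Ideal.mem_map_of_mem _ (b • i : I).2⟩ : J)
        = (algebraMap B Bbar b) • ⟨algebraMap B Bbar i, Ideal.mem_map_of_mem _ i.2⟩ := by
      ext
      show algebraMap B Bbar (b * (i : B)) = algebraMap B Bbar b * algebraMap B Bbar (i : B)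
      rw [map_mul]
    rw [h1, smul_tmul]
    congr 1
    show Φ (algebraMap B Bbar b) * algebraMap A Abar a = algebraMap A Abar (b • a)
    rw [hΦext, hsmulA, map_mul]
  set g : I ⊗[B] A →+ (J ⊗[Bbar] Abar) := TensorProduct.liftAddHom G hGbal with hg
  -- the retraction r : J ⊗[Bbar] Abar → I ⊗[B] A
  set Rm : (J : Type _) →+ Abar →+ (I ⊗[B] A) :=
    AddMonoidHom.mk' (fun x => AddMonoidHom.mk'
      (fun a => (⟨qB x, hmemI x x.2⟩ : I) ⊗ₜ[B] qA a)
      (fun a b => by rw [hqAadd, tmul_add]))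
      (fun x y => by
        ext a
        simp only [AddMonoidHom.mk'_apply, AddMonoidHom.add_apply]
        have : (⟨qB ((x + y : J) : Bbar), hmemI _ (x + y : J).2⟩ : I)
            = ⟨qB x, hmemI _ x.2⟩ + ⟨qB y, hmemI _ y.2⟩ := by
          ext; exact hqBadd x y
        rw [this, add_tmul]) with hRm
  have hRbal : ∀ (c : Bbar) (x : J) (a : Abar), Rm (c • x) a = Rm x (c • a) := by
    intro c x a
    simp only [hRm, AddMonoidHom.mk'_apply]
    have h1 : (⟨qB ((c • x : J) : Bbar), hmemI _ (c • x : J).2⟩ : I)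
        = qB c • ⟨qB x, hmemI _ x.2⟩ := by
      ext
      show qB (c * (x : Bbar)) = qB c * qB x
      exact hqBmul c x
    have h2 : qA (c • a) = qB c • qA a := by
      show qA (Φ c * a) = _
      rw [hqAmul, hcomm, hsmulA]
    rw [h1, smul_tmul, h2]
  set r : (J ⊗[Bbar] Abar) →+ I ⊗[B] A := TensorProduct.liftAddHom Rm hRbal with hr
  -- r ∘ g = id
  have hrg : ∀ z : I ⊗[B] A, r (g z) = z := by
    intro z
    induction z using TensorProduct.induction_on with
    | zero => simp
    | tmul i a =>
      rw [hg, hr]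
      rw [TensorProduct.liftAddHom_tmul, hG]
      simp only [AddMonoidHom.mk'_apply]
      rw [TensorProduct.liftAddHom_tmul, hRm]
      simp only [AddMonoidHom.mk'_apply]
      congr 1
      · ext; exact hqBsec i
      · exact hqAsec a
    | add x y hx hy => rw [map_add, map_add, hx, hy]
  -- compatibility of the two lift maps
  set LB : I ⊗[B] A →ₗ[B] A :=
    TensorProduct.lift (((LinearMap.lsmul B A).comp I.subtype)) with hLB
  set LBbar : J ⊗[Bbar] Abar →ₗ[Bbar] Abar :=
    TensorProduct.lift (((LinearMap.lsmul Bbar Abar).comp J.subtype)) with hLBbar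
  have hcompat : ∀ z : I ⊗[B] A, LBbar (g z) = algebraMap A Abar (LB z) := by
    intro z
    induction z using TensorProduct.induction_on with
    | zero => simp
    | tmul i a =>
      rw [hg, TensorProduct.liftAddHom_tmul, hG]
      simp only [AddMonoidHom.mk'_apply]
      rw [hLBbar, hLB, TensorProduct.lift.tmul, TensorProduct.lift.tmul]
      simp only [LinearMap.coe_comp, Function.comp_apply, Submodule.coe_subtype,
        LinearMap.lsmul_apply]
      show Φ (algebraMap B Bbar i) * algebraMap A Abar a = algebraMap A Abar ((i : B) • a)
      rw [hΦext, hsmulA, map_mul]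
    | add x y hx hy => simp only [map_add, hx, hy]
  -- extract a witness from hI
  have hI' : ¬ Function.Injective LB := hI
  have hwit : ∃ z : I ⊗[B] A, z ≠ 0 ∧ LB z = 0 := by
    by_contra h
    push_neg at h
    apply hI'
    intro x y hxy
    have : LB (x - y) = 0 := by rw [map_sub, hxy, sub_self]
    by_contra hne
    exact (h (x - y) (sub_ne_zero.2 hne)) this
  obtain ⟨z, hz0, hzL⟩ := hwit
  have key : ¬ Function.Injective LBbar := by
    intro hinj
    have h1 : LBbar (g z) = 0 := by rw [hcompat, hzL, map_zero]
    have h2 : g z = 0 := by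
      apply hinj
      rw [h1, map_zero]
    have : z = 0 := by rw [← hrg z, h2, map_zero]
    exact hz0 this
  refine ⟨key, ?_⟩
  intro hflat
  apply key
  have h := (Module.Flat.iff_rTensor_injective' (R := Bbar) (M := Abar)).mp hflat J
  rw [hLBbar, ← LinearMap.lid_comp_rTensor]
  exact (TensorProduct.lid Bbar Abar).injective.comp h
end
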